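/- Let q be prime, W Schwartz on ℝ, R > 0, H = q/R, χ a Dirichlet character mod q, and u an integer coprime to q. Then the Poisson summation identity holds: (√q / R) Σ_{r ∈ ℤ, gcd(r,q)=1} W(r/R) χ(r) e(u r⁻¹ / q) = Σ_{h ∈ ℤ} Ŵ(h/H) q^{−1/2} S_χ(h, u; q), where S_χ(h,u;q) = Σ_{x units mod q} χ(x) e((ux⁻¹ + hx)/q). -/

import Mathlib

noncomputable def eZ (N : ℕ) (x : ZMod N) : ℂ :=
  Complex.exp (2 * Real.pi * Complex.I * ((x.val : ℂ) / (N : ℂ)))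

/-- Twisted Kloosterman sum `S_χ(a,b;q)`. -/
noncomputable def twistedKloosterman (q : ℕ) [NeZero q] (χ : DirichletCharacter ℂ q)
    (a b : ZMod q) : ℂ :=
  ∑ x : (ZMod q)ˣ, χ x * eZ q (a * x + b * (x⁻¹ : (ZMod q)ˣ))

set_option maxHeartbeats 1600000

open Complex Real MeasureTheory SchwartzMap Asymptotics Filter FourierTransform



lemma eZ_eq_stdAddChar (N : ℕ) [NeZero N] (x : ZMod N) : eZ N x = ZMod.stdAddChar x := by
  rw [eZ, ZMod.stdAddChar_apply, ZMod.toCircle_apply]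
  push_cast
  ring_nf

lemma eZ_add (N : ℕ) [NeZero N] (x y : ZMod N) : eZ N (x + y) = eZ N x * eZ N y := by
  simp [eZ_eq_stdAddChar, AddChar.map_add_eq_mul]

lemma eZ_intCast (N : ℕ) [NeZero N] (j : ℤ) :
    eZ N ((j : ZMod N)) = Complex.exp (2 * Real.pi * Complex.I * j / N) := by
  rw [eZ_eq_stdAddChar, ZMod.stdAddChar_coe]

lemma norm_eZ (N : ℕ) [NeZero N] (x : ZMod N) : ‖eZ N x‖ = 1 := by
  rw [eZ_eq_stdAddChar, ZMod.stdAddChar_apply]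
  exact Circle.norm_coe _

noncomputable def dilateSchwartz (f : SchwartzMap ℝ ℂ) (c : ℝ) (hc : c ≠ 0) : SchwartzMap ℝ ℂ :=
  SchwartzMap.compCLMOfContinuousLinearEquiv ℝ
    ((LinearEquiv.smulOfNeZero ℝ ℝ c hc).toContinuousLinearEquiv) f

lemma dilateSchwartz_apply (f : SchwartzMap ℝ ℂ) (c : ℝ) (hc : c ≠ 0) (x : ℝ) :
    dilateSchwartz f c hc x = f (c * x) := by
  simp [dilateSchwartz, LinearEquiv.smulOfNeZero, smul_eq_mul]
  rfl

lemma schwartz_summable_int (f : SchwartzMap ℝ ℂ) : Summable fun n : ℤ => ‖f n‖ := by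
  have h := (f.isBigO_cocompact_rpow (-2)).comp_tendsto Int.tendsto_coe_cofinite
  have hs : Summable fun n : ℤ => |(n : ℝ)| ^ (-2 : ℝ) := Real.summable_abs_int_rpow one_lt_two
  exact (summable_of_isBigO hs h).norm

lemma fourier_dilate (f : ℝ → ℂ) (c : ℝ) (hc : 0 < c) (ξ : ℝ) :
    𝓕 (fun x => f (c * x)) ξ = (c⁻¹ : ℝ) • 𝓕 f (ξ / c) := by
  rw [Real.fourier_real_eq, Real.fourier_real_eq]
  have key : ∀ v : ℝ, (𝐞 (-(v * ξ)) : Circle) • f (c * v)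
      = (fun x => (𝐞 (-(x * (ξ / c))) : Circle) • f x) (c * v) := by
    intro v
    simp only
    congr 2
    field_simp
  calc ∫ v : ℝ, (𝐞 (-(v * ξ)) : Circle) • f (c * v)
      = ∫ v : ℝ, (fun x => (𝐞 (-(x * (ξ / c))) : Circle) • f x) (c * v) := by
        exact integral_congr_ae (Filter.Eventually.of_forall key)
    _ = |c⁻¹| • ∫ x : ℝ, (𝐞 (-(x * (ξ / c))) : Circle) • f x :=
        MeasureTheory.Measure.integral_comp_mul_left (fun x => (𝐞 (-(x * (ξ / c))) : Circle) • f x) c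
    _ = (c⁻¹ : ℝ) • ∫ x : ℝ, (𝐞 (-(x * (ξ / c))) : Circle) • f x := by
        rw [abs_of_pos (inv_pos.mpr hc)]

lemma exp_congr_mod (q : ℕ) [NeZero q] {m k : ℤ} (h : (m : ZMod q) = (k : ZMod q)) :
    Complex.exp (2 * Real.pi * Complex.I * m / q) =
      Complex.exp (2 * Real.pi * Complex.I * k / q) := by
  have hd : (q : ℤ) ∣ m - k := by
    rwa [← ZMod.intCast_zmod_eq_zero_iff_dvd, Int.cast_sub, sub_eq_zero]
  obtain ⟨t, ht⟩ := hd
  have hm : m = k + q * t := by linarith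
  have hq : (q : ℂ) ≠ 0 := Nat.cast_ne_zero.mpr (NeZero.ne q)
  rw [hm]
  push_cast
  rw [show 2 * (Real.pi:ℂ) * Complex.I * (k + q * t) / q
      = 2 * (Real.pi:ℂ) * Complex.I * k / q + t * (2 * Real.pi * Complex.I) by
    field_simp]
  rw [Complex.exp_add, Complex.exp_int_mul_two_pi_mul_I, mul_one]

lemma sum_zmod_eq_sum_units {q : ℕ} [NeZero q] (F : ZMod q → ℂ)
    (h0 : ∀ a : ZMod q, ¬IsUnit a → F a = 0) :
    ∑ a : ZMod q, F a = ∑ x : (ZMod q)ˣ, F x := by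
  classical
  have h1 : ∑ x : (ZMod q)ˣ, F x
      = ∑ a ∈ Finset.univ.image (fun x : (ZMod q)ˣ => (x : ZMod q)), F a :=
    (Finset.sum_image (fun x _ y _ h => Units.ext h)).symm
  rw [h1]
  refine (Finset.sum_subset (Finset.subset_univ _) ?_).symm
  intro a _ ha
  refine h0 a fun hu => ha ?_
  exact Finset.mem_image.mpr ⟨hu.unit, Finset.mem_univ _, hu.unit_spec⟩

lemma isCoprime_int_prime_iff {q : ℕ} (hq : q.Prime) (r : ℤ) :
    IsCoprime r (q : ℤ) ↔ ¬ ((q : ℤ) ∣ r) := by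
  rw [Int.isCoprime_iff_gcd_eq_one]
  have h1 : Int.gcd r q = Nat.gcd r.natAbs q := by
    simp [Int.gcd]
  rw [h1, Nat.gcd_comm, ← Nat.coprime_iff_gcd_eq_one, hq.coprime_iff_not_dvd,
    ← Int.natCast_dvd_natCast]
  simp [Int.natAbs_dvd, Int.dvd_natAbs]

lemma fourier_eq_eZ (q : ℕ) [NeZero q] (h : ℤ) (a : ZMod q) :
    fourier h ((((a.val : ℝ) / q : ℝ)) : UnitAddCircle) = eZ q ((h : ZMod q) * a) := by
  have hq : (q : ℂ) ≠ 0 := Nat.cast_ne_zero.mpr (NeZero.ne q)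
  have h2 : (h : ZMod q) * a = ((h * (a.val : ℤ) : ℤ) : ZMod q) := by
    push_cast [ZMod.natCast_zmod_val]
    ring
  rw [fourier_coe_apply, h2, eZ_intCast]
  congr 1
  push_cast
  field_simp
noncomputable def zmodIntEquiv (q : ℕ) [NeZero q] : ZMod q × ℤ ≃ ℤ where
  toFun p := (p.1.val : ℤ) + p.2 * q
  invFun r := ((r : ZMod q), r / q)
  left_inv := by
    rintro ⟨a, n⟩
    have hq : 0 < (q : ℤ) := by exact_mod_cast Nat.pos_of_ne_zero (NeZero.ne q)
    have hval : ((a.val : ℤ)) < q := by exact_mod_cast ZMod.val_lt a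
    have hval0 : 0 ≤ (a.val : ℤ) := Int.natCast_nonneg _
    have h1 : (((a.val : ℤ) + n * q : ℤ) : ZMod q) = a := by
      push_cast [ZMod.natCast_zmod_val]
      simp [ZMod.natCast_self]
    have h2 : ((a.val : ℤ) + n * q) / q = n := by
      rw [Int.add_mul_ediv_right _ _ hq.ne', Int.ediv_eq_zero_of_lt hval0 hval, zero_add]
    exact Prod.ext h1 h2
  right_inv := by
    intro r
    simp only
    rw [ZMod.val_intCast, mul_comm]
    exact Int.emod_add_mul_ediv r q

lemma zmodIntEquiv_apply (q : ℕ) [NeZero q] (p : ZMod q × ℤ) :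
    zmodIntEquiv q p = (p.1.val : ℤ) + p.2 * q := rfl
open scoped Classical

open scoped Classical in
theorem stmt_17 (q : ℕ) (hq : q.Prime) [NeZero q] (χ : DirichletCharacter ℂ q)
    (W : SchwartzMap ℝ ℂ) (R : ℝ) (hR : 0 < R) (u : ℤ) (hu : IsCoprime u (q : ℤ)) :
    ((Real.sqrt q / R : ℝ) : ℂ) *
        ∑' r : ℤ, (if IsCoprime r (q : ℤ) then
          W ((r : ℝ) / R) * χ (r : ZMod q) *
            eZ q ((u : ZMod q) * ((r : ZMod q))⁻¹)
        else 0) =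
      ∑' h : ℤ,
        FourierTransform.fourier (W : ℝ → ℂ) ((h : ℝ) / ((q : ℝ) / R)) *
          ((Real.sqrt q : ℝ) : ℂ)⁻¹ *
          twistedKloosterman q χ (h : ZMod q) (u : ZMod q) := by
  haveI : Fact q.Prime := ⟨hq⟩
  have hqposn : 0 < q := Nat.pos_of_ne_zero (NeZero.ne q)
  have hqpos : (0 : ℝ) < q := by exact_mod_cast hqposn
  have hq0 : (q : ℝ) ≠ 0 := hqpos.ne'
  have hRne : R ≠ 0 := hR.ne'
  have hcpos : (0 : ℝ) < (q : ℝ) / R := div_pos hqpos hR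
  set c : ZMod q → ℂ := fun a => χ a * eZ q ((u : ZMod q) * a⁻¹) with hc_def
  have hc_norm : ∀ a, ‖c a‖ ≤ 1 := by
    intro a
    rw [hc_def]
    simp only
    calc ‖χ a * eZ q ((u : ZMod q) * a⁻¹)‖ = ‖χ a‖ * 1 := by rw [norm_mul, norm_eZ]
      _ ≤ 1 := by rw [mul_one]; exact χ.norm_le_one a
  set WR := dilateSchwartz W R⁻¹ (inv_ne_zero hRne) with hWR
  set g := dilateSchwartz W ((q : ℝ)/R) hcpos.ne' with hg
  set G := SchwartzMap.fourierTransformCLM ℝ g with hG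
  set f : ℤ → ℂ := fun r => WR r * c ((r : ZMod q)) with hf
  -- Step 1 : rewrite the summand
  have step1 : ∀ r : ℤ, (if IsCoprime r (q:ℤ) then
      W ((r:ℝ)/R) * χ (r : ZMod q) * eZ q ((u:ZMod q) * ((r : ZMod q))⁻¹) else 0) = f r := by
    intro r
    by_cases hco : IsCoprime r (q:ℤ)
    · rw [if_pos hco, hf]
      simp only [hWR, dilateSchwartz_apply, hc_def]
      rw [mul_assoc]
      congr 2
      rw [div_eq_inv_mul]
    · rw [if_neg hco, hf]
      have hdvd : (q:ℤ) ∣ r := by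
        by_contra hnd; exact hco ((isCoprime_int_prime_iff hq r).mpr hnd)
      have h0 : ((r : ZMod q)) = 0 := (ZMod.intCast_zmod_eq_zero_iff_dvd r q).mpr hdvd
      simp only [hc_def, h0]
      rw [χ.map_nonunit not_isUnit_zero, zero_mul, mul_zero]
  -- summability of f
  have hsumf : Summable f := by
    apply Summable.of_norm_bounded (schwartz_summable_int WR)
    intro r
    rw [hf]
    simp only
    calc ‖WR r * c (r : ZMod q)‖ = ‖WR r‖ * ‖c (r : ZMod q)‖ := norm_mul _ _
      _ ≤ ‖WR r‖ * 1 := mul_le_mul_of_nonneg_left (hc_norm _) (norm_nonneg _)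
      _ = ‖WR r‖ := mul_one _
  -- Step 3 : reindex over residue classes
  have step3 : ∑' r : ℤ, f r = ∑ a : ZMod q, ∑' n : ℤ, f ((a.val : ℤ) + n * q) := by
    rw [← Equiv.tsum_eq (zmodIntEquiv q) f]
    have hsumfe : Summable fun p : ZMod q × ℤ => f ((zmodIntEquiv q) p) :=
      ((zmodIntEquiv q).summable_iff).mpr hsumf
    rw [Summable.tsum_prod' hsumfe (fun b => hsumfe.prod_factor b), tsum_fintype]
    exact Finset.sum_congr rfl fun a _ => tsum_congr fun n => by rw [zmodIntEquiv_apply]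
  have hcast : ∀ (a : ZMod q) (n : ℤ), (((a.val : ℤ) + n * q : ℤ) : ZMod q) = a := by
    intro a n
    push_cast [ZMod.natCast_zmod_val]
    simp [ZMod.natCast_self]
  have inner1 : ∀ a : ZMod q, ∑' n : ℤ, f ((a.val : ℤ) + n * q)
      = (∑' n : ℤ, g ((a.val : ℝ)/q + n)) * c a := by
    intro a
    rw [← tsum_mul_right]
    apply tsum_congr; intro n
    rw [hf]
    simp only [hcast a n]
    congr 1
    rw [hWR, hg, dilateSchwartz_apply, dilateSchwartz_apply]
    congr 1
    push_cast
    field_simp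
  have inner2 : ∀ a : ZMod q, (∑' n : ℤ, g ((a.val : ℝ)/q + n))
      = ∑' h : ℤ, G h * eZ q ((h : ZMod q) * a) := by
    intro a
    rw [SchwartzMap.tsum_eq_tsum_fourier g ((a.val : ℝ)/q)]
    apply tsum_congr; intro h
    rw [hG, SchwartzMap.fourierTransformCLM_apply, fourier_eq_eZ]
  have hGsumm := schwartz_summable_int G
  have hsummand : ∀ a : ZMod q,
      Summable (fun h : ℤ => G h * eZ q ((h : ZMod q) * a) * c a) := by
    intro a
    apply Summable.of_norm_bounded (hGsumm.mul_right ‖c a‖)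
    intro h
    rw [norm_mul, norm_mul, norm_eZ, mul_one]
  -- character sum identity
  have hchar : ∀ h : ℤ, ∑ a : ZMod q, eZ q ((h : ZMod q) * a) * c a
      = twistedKloosterman q χ (h : ZMod q) (u : ZMod q) := by
    intro h
    have h1 : ∀ a : ZMod q, eZ q ((h : ZMod q) * a) * c a
        = χ a * eZ q ((h : ZMod q) * a + (u : ZMod q) * a⁻¹) := by
      intro a
      rw [hc_def]
      simp only
      rw [eZ_add]
      ring
    rw [Finset.sum_congr rfl fun a _ => h1 a, twistedKloosterman,
      sum_zmod_eq_sum_units (fun a => χ a * eZ q ((h : ZMod q) * a + (u : ZMod q) * a⁻¹))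
        (fun a ha => mul_eq_zero_of_left (χ.map_nonunit ha) _)]
    apply Finset.sum_congr rfl
    intro x _
    congr 2
    rw [ZMod.inv_coe_unit]
  -- dilation : compute G
  have hGval : ∀ h : ℤ, G (h : ℝ)
      = ((((q:ℝ)/R)⁻¹ : ℝ) : ℂ) * FourierTransform.fourier (W : ℝ → ℂ) ((h : ℝ) / ((q : ℝ) / R)) := by
    intro h
    have hgfun : ⇑g = fun x => W (((q:ℝ)/R) * x) := by
      funext x
      rw [hg, dilateSchwartz_apply]
    rw [hG, SchwartzMap.fourierTransformCLM_apply, SchwartzMap.fourier_coe, hgfun,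
      fourier_dilate (W : ℝ → ℂ) ((q:ℝ)/R) hcpos, Complex.real_smul]
  -- scalar identity
  have hsqrt : Real.sqrt q * Real.sqrt q = q := Real.mul_self_sqrt hqpos.le
  have hsqrtne : Real.sqrt q ≠ 0 := (Real.sqrt_pos.mpr hqpos).ne'
  have hscal : (Real.sqrt q / R) * (((q:ℝ)/R)⁻¹) = (Real.sqrt q)⁻¹ := by
    rw [inv_div, div_mul_div_comm, mul_comm R ((q:ℝ))]
    rw [← hsqrt]
    field_simp
    rw [Real.sqrt_sq (Real.sqrt_nonneg _)]
  -- assemble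
  rw [tsum_congr step1, step3]
  calc ((Real.sqrt q / R : ℝ) : ℂ) * ∑ a : ZMod q, ∑' n : ℤ, f ((a.val : ℤ) + n * q)
      = ((Real.sqrt q / R : ℝ) : ℂ) *
          ∑ a : ZMod q, ∑' h : ℤ, G h * eZ q ((h : ZMod q) * a) * c a := by
        congr 1
        apply Finset.sum_congr rfl
        intro a _
        rw [inner1 a, inner2 a, ← tsum_mul_right]
    _ = ((Real.sqrt q / R : ℝ) : ℂ) *
          ∑' h : ℤ, ∑ a : ZMod q, G h * eZ q ((h : ZMod q) * a) * c a := by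
        rw [← Summable.tsum_finsetSum (fun a _ => hsummand a)]
    _ = ∑' h : ℤ, ((Real.sqrt q / R : ℝ) : ℂ) *
          ∑ a : ZMod q, G h * eZ q ((h : ZMod q) * a) * c a := by
        rw [← tsum_mul_left]
    _ = ∑' h : ℤ, FourierTransform.fourier (W : ℝ → ℂ) ((h : ℝ) / ((q : ℝ) / R)) *
          ((Real.sqrt q : ℝ) : ℂ)⁻¹ * twistedKloosterman q χ (h : ZMod q) (u : ZMod q) := by
        apply tsum_congr
        intro h
        rw [← hchar h]
        have expand : ∀ a : ZMod q, G h * eZ q ((h : ZMod q) * a) * c a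
            = (((((q:ℝ)/R)⁻¹ : ℝ) : ℂ) * FourierTransform.fourier (W : ℝ → ℂ) ((h : ℝ) / ((q : ℝ) / R)))
              * (eZ q ((h : ZMod q) * a) * c a) := by
          intro a
          rw [hGval h]
          ring
        rw [Finset.sum_congr rfl fun a _ => expand a, ← Finset.mul_sum]
        have hconst : ((Real.sqrt q / R : ℝ) : ℂ) * ((((q:ℝ)/R)⁻¹ : ℝ) : ℂ)
            = ((Real.sqrt q : ℝ) : ℂ)⁻¹ := by
          rw [← Complex.ofReal_mul, hscal, Complex.ofReal_inv]
        linear_combination (FourierTransform.fourier (W : ℝ → ℂ) ((h : ℝ) / ((q : ℝ) / R)) *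
          ∑ a : ZMod q, eZ q ((h : ZMod q) * a) * c a) * hconst
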